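/- arXiv:1702.08446 — 8 statements merged into one kernel-verified Lean document; each statement's English description precedes it below -/
import Mathlib

section
/- Let (M, 𝒜, σ) be a measure space with σ a σ-finite measure, let f : M → [0,∞) be measurable, let h : M × M → [0,∞) and a : M × M → [0,1] be jointly measurable, and suppose s(x) := ∫_M a(x,y) h(x,y) σ(dy) ≤ 1 for every x ∈ M. Define the Markov transition kernel K(x, A) = ∫_A a(x,y) h(x,y) σ(dy) + (1 − s(x)) · 1_A(x) for measurable A ⊆ M. If the detailed balance condition f(x) a(x,y) h(x,y) = f(y) a(y,x) h(y,x) holds for all x, y ∈ M, then the measure f·σ is invariant for K: for every measurable set A ⊆ M, ∫_M K(x, A) f(x) σ(dx) = ∫_A f(x) σ(dx). -/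
open MeasureTheory

/-- If the Metropolis–Hastings kernel
`K(x, A) = ∫_A a(x,y) h(x,y) σ(dy) + (1 − s(x)) 1_A(x)` satisfies detailed balance
with respect to the density `f`, then the measure `f·σ` is invariant for `K`. -/
theorem detailed_balance_implies_invariance
    {M : Type*} [MeasurableSpace M] (σ : Measure M) [SigmaFinite σ]
    (f : M → ENNReal) (h a : M → M → ENNReal)
    (hf : Measurable f) (hffin : ∀ x, f x ≠ ⊤)
    (hh : Measurable (Function.uncurry h)) (hhfin : ∀ x y, h x y ≠ ⊤)
    (ha : Measurable (Function.uncurry a)) (ha1 : ∀ x y, a x y ≤ 1)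
    (hs : ∀ x, (∫⁻ y, a x y * h x y ∂σ) ≤ 1)
    (hdb : ∀ x y, f x * (a x y * h x y) = f y * (a y x * h y x)) :
    ∀ A : Set M, MeasurableSet A →
      (∫⁻ x, ((∫⁻ y in A, a x y * h x y ∂σ)
          + (1 - ∫⁻ y, a x y * h x y ∂σ) * A.indicator (fun _ => 1) x) * f x ∂σ)
        = ∫⁻ x in A, f x ∂σ := by
  intro A hA
  set g : M → M → ENNReal := fun x y => a x y * h x y with hgdef
  have hgm : Measurable (Function.uncurry g) := ha.mul hh
  set ι : M → ENNReal := A.indicator (fun _ => 1) with hι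
  have hιm : Measurable ι := measurable_const.indicator hA
  have hιfin : ∀ x, ι x ≠ ⊤ := by
    intro x
    by_cases hx : x ∈ A <;> simp [hι, Set.indicator, hx]
  -- set integral as indicator-weighted integral
  have hind : ∀ x, (∫⁻ y in A, g x y ∂σ) = ∫⁻ y, g x y * ι y ∂σ := by
    intro x
    rw [← lintegral_indicator hA _]
    congr 1; ext y
    by_cases hy : y ∈ A <;> simp [hι, Set.indicator, hy]
  have hsm : Measurable fun x => ∫⁻ y, g x y ∂σ := hgm.lintegral_prod_right'
  have hsAm : Measurable fun x => ∫⁻ y in A, g x y ∂σ := by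
    simp only [hind]
    exact (hgm.mul (hιm.comp measurable_snd)).lintegral_prod_right'
  have split :
      (∫⁻ x, ((∫⁻ y in A, g x y ∂σ) + (1 - ∫⁻ y, g x y ∂σ) * ι x) * f x ∂σ)
        = (∫⁻ x, (∫⁻ y in A, g x y ∂σ) * f x ∂σ)
          + ∫⁻ x, (1 - ∫⁻ y, g x y ∂σ) * ι x * f x ∂σ := by
    simp only [add_mul]
    exact lintegral_add_left (hsAm.mul hf) _
  -- first term: swap and use detailed balance
  have T1 : (∫⁻ x, (∫⁻ y in A, g x y ∂σ) * f x ∂σ)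
      = ∫⁻ y, (f y * ι y) * ∫⁻ x, g y x ∂σ ∂σ := by
    have e1 : ∀ x, (∫⁻ y in A, g x y ∂σ) * f x = ∫⁻ y, f x * (g x y * ι y) ∂σ := by
      intro x
      rw [hind, mul_comm, lintegral_const_mul' _ _ (hffin x)]
    simp only [e1]
    rw [lintegral_lintegral_swap]
    · congr 1; ext y
      have e2 : ∀ x, f x * (g x y * ι y) = (f y * ι y) * g y x := by
        intro x
        rw [← mul_assoc, hdb x y]
        ring
      simp only [e2]
      exact lintegral_const_mul' _ _ (ENNReal.mul_ne_top (hffin y) (hιfin y))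
    · exact ((hf.comp measurable_fst).mul
        (hgm.mul (hιm.comp measurable_snd))).aemeasurable
  -- second term
  have T2 : (∫⁻ x, (1 - ∫⁻ y, g x y ∂σ) * ι x * f x ∂σ)
      = ∫⁻ x, (f x * ι x) * (1 - ∫⁻ y, g x y ∂σ) ∂σ := by
    congr 1; ext x; ring
  rw [split, T1, T2, ← lintegral_add_left (f := fun x => f x * ι x * ∫⁻ y, g x y ∂σ) ((hf.mul hιm).mul hsm)]
  have final : ∀ x, (f x * ι x) * (∫⁻ y, g x y ∂σ)
      + (f x * ι x) * (1 - ∫⁻ y, g x y ∂σ) = f x * ι x := by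
    intro x
    rw [← mul_add, add_tsub_cancel_of_le (hs x), mul_one]
  simp only [final]
  rw [← lintegral_indicator hA _]
  congr 1; ext x
  by_cases hx : x ∈ A <;> simp [hι, Set.indicator, hx]
end

section
/- Let d ≥ 3 be an integer, let 0 < R₁ < R₀, set p = (R₁/R₀)^d, and define f : (0, R₀] → ℝ by f(r) = 1 − p for r < R₁ and f(r) = −p for R₁ < r ≤ R₀. Define u : (0, R₀] → ℝ by u(r) = ((R₁^d − R₀^d)/(d R₀^d)) r² for 0 < r ≤ R₁ and u(r) = −(2 R₁^d/(d(2−d))) r^{2−d} + (R₁^d/(d R₀^d)) r² + R₁²/(2−d) for R₁ ≤ r ≤ R₀. Then u is continuously differentiable on (0, R₀], satisfies the radial ODE u''(r) + ((d−1)/r) u'(r) = −2 f(r) for every r ∈ (0, R₀) with r ≠ R₁, satisfies u'(R₀) = 0, and lim_{r→0⁺} u(r) = 0. -/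
open Set Real Filter

/-- The radial function `u` solves the radial Neumann problem `u'' + ((d−1)/r) u' = −2f`
on `(0, R₀]` in dimension `d ≥ 3`, where `f = 1_{(0,R₁)} − p` with `p = (R₁/R₀)^d`. -/
theorem neumann_solution_dim_ge_three
    (d : ℕ) (hd : 3 ≤ d)
    (R₀ R₁ p : ℝ) (hR₁ : 0 < R₁) (hR : R₁ < R₀) (hp : p = (R₁ / R₀) ^ d)
    (f u : ℝ → ℝ)
    (hf_in : ∀ r : ℝ, 0 < r → r < R₁ → f r = 1 - p)
    (hf_out : ∀ r : ℝ, R₁ < r → f r = -p)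
    (hu_in : ∀ r : ℝ, 0 < r → r ≤ R₁ →
      u r = ((R₁ ^ d - R₀ ^ d) / ((d : ℝ) * R₀ ^ d)) * r ^ 2)
    (hu_out : ∀ r : ℝ, R₁ ≤ r →
      u r = -(2 * R₁ ^ d / ((d : ℝ) * (2 - (d : ℝ)))) * r ^ ((2 : ℝ) - (d : ℝ))
        + (R₁ ^ d / ((d : ℝ) * R₀ ^ d)) * r ^ 2 + R₁ ^ 2 / (2 - (d : ℝ))) :
    ContDiffOn ℝ 1 u (Set.Ioc 0 R₀) ∧
    (∀ r : ℝ, 0 < r → r < R₀ → r ≠ R₁ →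
      deriv (deriv u) r + (((d : ℝ) - 1) / r) * deriv u r = -2 * f r) ∧
    deriv u R₀ = 0 ∧
    Filter.Tendsto u (nhdsWithin 0 (Set.Ioi 0)) (nhds 0) := by
  have hR₀ : (0:ℝ) < R₀ := hR₁.trans hR
  have hd3 : (3:ℝ) ≤ (d:ℝ) := by exact_mod_cast hd
  have hdne : (d:ℝ) ≠ 0 := by linarith
  have h2d : (2:ℝ) - (d:ℝ) ≠ 0 := by linarith
  have hR₀ne : R₀ ≠ 0 := ne_of_gt hR₀
  have hR₁ne : R₁ ≠ 0 := ne_of_gt hR₁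
  have hR₀d : R₀ ^ d ≠ 0 := pow_ne_zero _ hR₀ne
  have hR₁d : R₁ ^ d ≠ 0 := pow_ne_zero _ hR₁ne
  have hpval : p = R₁ ^ d / R₀ ^ d := by rw [hp, div_pow]
  set A : ℝ := (R₁ ^ d - R₀ ^ d) / ((d : ℝ) * R₀ ^ d) with hA
  set B : ℝ := -(2 * R₁ ^ d / ((d : ℝ) * (2 - (d : ℝ)))) with hB
  set C : ℝ := R₁ ^ d / ((d : ℝ) * R₀ ^ d) with hC
  set e : ℝ := (2 : ℝ) - (d : ℝ) with he
  -- rpow conversions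
  have hrpow : ∀ x : ℝ, 0 < x → x ^ e = x ^ 2 / x ^ d := by
    intro x hx
    rw [he, show (2:ℝ) = ((2:ℕ):ℝ) by norm_num, Real.rpow_sub hx,
      Real.rpow_natCast, Real.rpow_natCast]
  have hrpow1 : ∀ x : ℝ, 0 < x → x ^ (e - 1) = x / x ^ d := by
    intro x hx
    rw [he, show (2:ℝ) - (d:ℝ) - 1 = ((1:ℕ):ℝ) - ((d:ℕ):ℝ) by push_cast; ring,
      Real.rpow_sub hx, Real.rpow_natCast, Real.rpow_natCast, pow_one]
  have hrpow2 : ∀ x : ℝ, 0 < x → x ^ (e - 1 - 1) = 1 / x ^ d := by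
    intro x hx
    rw [he, show (2:ℝ) - (d:ℝ) - 1 - 1 = ((0:ℕ):ℝ) - ((d:ℕ):ℝ) by push_cast; ring,
      Real.rpow_sub hx, Real.rpow_natCast, Real.rpow_natCast, pow_zero]
  -- pieces
  set uin : ℝ → ℝ := fun r => A * r ^ 2 with huin
  set uout : ℝ → ℝ := fun r => B * r ^ e + C * r ^ 2 + R₁ ^ 2 / e with huout
  set U : ℝ → ℝ := fun r => if r ≤ R₁ then uin r else uout r with hU
  set v : ℝ → ℝ := fun r => if r ≤ R₁ then 2 * A * r else B * e * r ^ (e - 1) + 2 * C * r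
    with hv
  -- matching at R₁
  have hval : uin R₁ = uout R₁ := by
    simp only [huin, huout]
    rw [hrpow R₁ hR₁]
    simp only [hA, hB, hC, he]
    field_simp [show (2:ℝ) - (d:ℝ) ≠ 0 from h2d]
    ring
  have hder : 2 * A * R₁ = B * e * R₁ ^ (e - 1) + 2 * C * R₁ := by
    rw [hrpow1 R₁ hR₁]
    simp only [hA, hB, hC, he]
    field_simp [show (2:ℝ) - (d:ℝ) ≠ 0 from h2d]
    ring
  -- u = U on Ioi 0
  have huU : ∀ r : ℝ, 0 < r → u r = U r := by
    intro r hr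
    by_cases h : r ≤ R₁
    · rw [hu_in r hr h]; simp [hU, huin, h]
    · rw [hu_out r (le_of_not_ge h)]; simp [hU, huout, h, hB, hC, he]
  -- derivatives of the pieces
  have hin_deriv : ∀ r : ℝ, HasDerivAt uin (2 * A * r) r := by
    intro r
    have := ((hasDerivAt_pow 2 r).const_mul A)
    simpa [huin, mul_comm, mul_assoc, mul_left_comm] using this
  have hout_deriv : ∀ r : ℝ, 0 < r →
      HasDerivAt uout (B * e * r ^ (e - 1) + 2 * C * r) r := by
    intro r hr
    have h1 : HasDerivAt (fun x : ℝ => x ^ e) (e * r ^ (e - 1)) r :=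
      Real.hasDerivAt_rpow_const (Or.inl (ne_of_gt hr))
    have h2 := (h1.const_mul B).add (((hasDerivAt_pow 2 r).const_mul C))
    have h3 := h2.add_const (R₁ ^ 2 / e)
    have h4 : HasDerivAt uout (B * (e * r ^ (e - 1)) + C * (((2:ℕ):ℝ) * r ^ (2 - 1))) r := h3
    convert h4 using 1
    rw [show (2:ℕ) - 1 = 1 from rfl, pow_one]; push_cast; ring
  -- derivative of U
  have hU_deriv : ∀ r : ℝ, 0 < r → HasDerivAt U (v r) r := by
    intro r hr
    rcases lt_trichotomy r R₁ with h | h | h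
    · have hev : U =ᶠ[nhds r] uin := by
        filter_upwards [eventually_lt_nhds h] with x hx
        simp [hU, hx.le]
      rw [show v r = 2 * A * r by simp [hv, h.le]]
      exact (hin_deriv r).congr_of_eventuallyEq hev
    · subst h
      rw [show v r = 2 * A * r by simp [hv]]
      have hIic : HasDerivWithinAt U (2 * A * r) (Iic r) r := by
        refine ((hin_deriv r).hasDerivWithinAt).congr ?_ ?_
        · intro y hy; simp [hU, (mem_Iic.mp hy)]
        · simp [hU]
      have hIci : HasDerivWithinAt U (2 * A * r) (Ici r) r := by
        rw [hder]
        refine ((hout_deriv r hr).hasDerivWithinAt).congr ?_ ?_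
        · intro y hy
          rcases eq_or_lt_of_le (mem_Ici.mp hy) with h | h
          · simp [hU, ← h, hval]
          · simp [hU, not_le.mpr h]
        · simp [hU, hval]
      have := hIic.union hIci
      rwa [Iic_union_Ici, hasDerivWithinAt_univ] at this
    · have hev : U =ᶠ[nhds r] uout := by
        filter_upwards [eventually_gt_nhds h] with x hx
        simp [hU, not_le.mpr hx]
      rw [show v r = B * e * r ^ (e - 1) + 2 * C * r by simp [hv, not_le.mpr h]]
      exact (hout_deriv r hr).congr_of_eventuallyEq hev
  -- continuity of v
  have hv_cont : Continuous v := by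
    rw [hv]
    refine continuous_if_le continuous_id continuous_const
      (by fun_prop) ?_ ?_
    · refine ContinuousOn.add ?_ (by fun_prop)
      refine (continuousOn_const.mul ?_)
      intro x hx
      exact (Real.continuousAt_rpow_const x _ (Or.inl (by
        simp only [mem_setOf_eq] at hx
        exact fun h0 => hR₁ne (le_antisymm hR₁.le (h0 ▸ hx)).symm))).continuousWithinAt
    · intro x hx
      rw [hx] at *
      exact hder
  -- deriv u = v on Ioi 0
  have huU_ev : ∀ r : ℝ, 0 < r → u =ᶠ[nhds r] U := by
    intro r hr
    filter_upwards [eventually_gt_nhds hr] with x hx using huU x hx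
  have hderiv_u : ∀ r : ℝ, 0 < r → HasDerivAt u (v r) r := fun r hr =>
    (hU_deriv r hr).congr_of_eventuallyEq (huU_ev r hr)
  have hderiv_u_eq : ∀ r : ℝ, 0 < r → deriv u r = v r := fun r hr =>
    (hderiv_u r hr).deriv
  refine ⟨?_, ?_, ?_, ?_⟩
  · -- ContDiffOn
    have hUc : ContDiffOn ℝ 1 U (Ioi 0) := by
      have hiff := contDiffOn_succ_iff_deriv_of_isOpen (𝕜 := ℝ) (f := U) (n := 0)
        (isOpen_Ioi (a := (0:ℝ)))
      rw [zero_add] at hiff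
      rw [hiff]
      refine ⟨fun r hr => ((hU_deriv r hr).differentiableAt).differentiableWithinAt, ?_, ?_⟩
      · intro h; exact absurd h (by simp)
      · rw [contDiffOn_zero]
        exact (hv_cont.continuousOn).congr fun r hr => ((hU_deriv r hr).deriv)
    refine (hUc.mono (Ioc_subset_Ioi_self)).congr ?_
    intro r hr
    exact huU r hr.1
  · -- ODE
    intro r hr hrR₀ hrR₁
    have hderiv2 : deriv (deriv u) r = deriv v r := by
      apply Filter.EventuallyEq.deriv_eq
      filter_upwards [eventually_gt_nhds hr] with x hx using hderiv_u_eq x hx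
    rcases lt_or_gt_of_ne hrR₁ with h | h
    · -- inner region
      have hvloc : v =ᶠ[nhds r] fun x => 2 * A * x := by
        filter_upwards [eventually_lt_nhds h] with x hx
        simp [hv, hx.le]
      have : deriv v r = 2 * A := by
        rw [hvloc.deriv_eq]
        simpa using ((hasDerivAt_id r).const_mul (2 * A)).deriv
      rw [hderiv2, this, hderiv_u_eq r hr, hf_in r hr h,
        show v r = 2 * A * r by simp [hv, h.le], hpval]
      simp only [hA]
      field_simp
      ring
    · -- outer region
      have hvloc : v =ᶠ[nhds r] fun x => B * e * x ^ (e - 1) + 2 * C * x := by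
        filter_upwards [eventually_gt_nhds h] with x hx
        simp [hv, not_le.mpr hx]
      have hdv : deriv v r = B * e * ((e - 1) * r ^ (e - 1 - 1)) + 2 * C := by
        rw [hvloc.deriv_eq]
        have h1 : HasDerivAt (fun x : ℝ => x ^ (e - 1)) ((e - 1) * r ^ (e - 1 - 1)) r :=
          Real.hasDerivAt_rpow_const (Or.inl (ne_of_gt hr))
        have h2 := (h1.const_mul (B * e)).add ((hasDerivAt_id r).const_mul (2 * C))
        have h3 := h2.deriv
        simp only [mul_one] at h3
        exact h3
      rw [hderiv2, hdv, hderiv_u_eq r hr, hf_out r h,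
        show v r = B * e * r ^ (e - 1) + 2 * C * r by simp [hv, not_le.mpr h],
        hrpow1 r hr, hrpow2 r hr, hpval]
      have hrne : r ≠ 0 := ne_of_gt hr
      have hrd : r ^ d ≠ 0 := pow_ne_zero _ hrne
      simp only [hB, hC, he]
      field_simp [show (2:ℝ) - (d:ℝ) ≠ 0 from h2d]
      ring
  · -- Neumann at R₀
    rw [hderiv_u_eq R₀ hR₀, show v R₀ = B * e * R₀ ^ (e - 1) + 2 * C * R₀ by
      simp [hv, not_le.mpr hR], hrpow1 R₀ hR₀]
    simp only [hB, hC, he]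
    field_simp [show (2:ℝ) - (d:ℝ) ≠ 0 from h2d]
    ring
  · -- limit at 0
    have : Tendsto (fun r : ℝ => A * r ^ 2) (nhdsWithin 0 (Ioi 0)) (nhds 0) := by
      have hc : Continuous fun r : ℝ => A * r ^ 2 := by fun_prop
      have := hc.tendsto (0:ℝ)
      simpa using this.mono_left nhdsWithin_le_nhds
    refine this.congr' ?_
    filter_upwards [Ioo_mem_nhdsGT_of_mem (by constructor <;> [rfl; exact hR₁] : (0:ℝ) ∈ Ico 0 R₁)]
      with x hx
    rw [hu_in x hx.1 hx.2.le]
end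

section
/- Let 0 < R₁ < R₀, set p = R₁/R₀ and ν = R₀/R₁ = 1/p. With f(x) = 1_{(−R₁,R₁)}(x) − p on [−R₀, R₀] and u the piecewise function u(x) = (p−1)x² for |x| ≤ R₁, u(x) = p x² − 2R₁|x| + R₁² for R₁ ≤ |x| ≤ R₀, the autocorrelation time τ = 2·((1/(2R₀)) ∫_{−R₀}^{R₀} f(x) u(x) dx)/(p(1−p)) satisfies τ = R₀² h₁(ν), where h₁(ν) = (4/3)(ν − 1)/ν². Equivalently, ∫_{−R₀}^{R₀} f(x) u(x) dx = (4/3) R₀³ p²(1−p)². -/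
open MeasureTheory intervalIntegral

private lemma poly_int (c2 c1 c0 a b : ℝ) :
    ∫ x in a..b, (c2 * x ^ 2 + c1 * x + c0) =
      (c2 * b ^ 3 / 3 + c1 * b ^ 2 / 2 + c0 * b)
        - (c2 * a ^ 3 / 3 + c1 * a ^ 2 / 2 + c0 * a) := by
  apply intervalIntegral.integral_eq_sub_of_hasDerivAt
  · intro x _
    have h : HasDerivAt (fun x : ℝ => c2 * x ^ 3 / 3 + c1 * x ^ 2 / 2 + c0 * x)
        (c2 * (3 * x ^ 2) / 3 + c1 * (2 * x ^ 1) / 2 + c0 * 1) x := by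
      exact ((((hasDerivAt_pow 3 x).const_mul c2).div_const 3).add
        (((hasDerivAt_pow 2 x).const_mul c1).div_const 2)).add ((hasDerivAt_id x).const_mul c0)
    refine h.congr_deriv ?_
    ring
  · apply Continuous.intervalIntegrable
    fun_prop

private lemma integrable_of_ae_eq {a b : ℝ} {f g : ℝ → ℝ}
    (h : ∀ᵐ x : ℝ, x ∈ Set.uIoc a b → g x = f x)
    (hg : IntervalIntegrable g volume a b) : IntervalIntegrable f volume a b := by
  rw [intervalIntegrable_iff] at hg ⊢
  exact hg.congr ((ae_restrict_iff' measurableSet_uIoc).mpr h)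

private lemma ae_ne (c : ℝ) : ∀ᵐ x : ℝ, x ≠ c := by
  refine MeasureTheory.ae_iff.mpr ?_
  simp

/-- For reflected Brownian motion on the interval `[−R₀, R₀]`, the autocorrelation time of
the indicator of `(−R₁, R₁)` equals `R₀² h₁(ν)` with `h₁(ν) = (4/3)(ν−1)/ν²`, `ν = R₀/R₁`;
equivalently `∫ f u = (4/3) R₀³ p² (1−p)²`. -/
theorem brownian_autocorrelation_dim_one
    (R₀ R₁ p ν : ℝ) (hR₁ : 0 < R₁) (hR : R₁ < R₀)
    (hp : p = R₁ / R₀) (hν : ν = R₀ / R₁)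
    (f u : ℝ → ℝ)
    (hf_in : ∀ x : ℝ, |x| < R₁ → f x = 1 - p)
    (hf_out : ∀ x : ℝ, R₁ < |x| → f x = -p)
    (hu_in : ∀ x : ℝ, |x| ≤ R₁ → u x = (p - 1) * x ^ 2)
    (hu_out : ∀ x : ℝ, R₁ ≤ |x| → u x = p * x ^ 2 - 2 * R₁ * |x| + R₁ ^ 2) :
    (∫ x in (-R₀)..R₀, f x * u x) = (4 / 3) * R₀ ^ 3 * p ^ 2 * (1 - p) ^ 2 ∧
    2 * ((1 / (2 * R₀)) * ∫ x in (-R₀)..R₀, f x * u x) / (p * (1 - p))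
      = R₀ ^ 2 * ((4 / 3) * (ν - 1) / ν ^ 2) := by
  have hR0 : 0 < R₀ := hR₁.trans hR
  have hppos : 0 < p := by rw [hp]; positivity
  have hplt : p < 1 := by rw [hp]; exact (div_lt_one hR0).mpr hR
  -- three a.e. equalities on the pieces
  have hcong1 : ∀ᵐ x : ℝ, x ∈ Set.uIoc (-R₀) (-R₁) →
      ((-p * p) * x ^ 2 + (-p * (2 * R₁)) * x + (-p * R₁ ^ 2)) = f x * u x := by
    filter_upwards [ae_ne (-R₁)] with x hx hmem
    rw [Set.uIoc_of_le (by linarith)] at hmem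
    obtain ⟨h1, h2⟩ := hmem
    have hx2 : x < -R₁ := lt_of_le_of_ne h2 hx
    have habs : |x| = -x := abs_of_neg (by linarith)
    rw [hf_out x (by rw [habs]; linarith), hu_out x (by rw [habs]; linarith), habs]
    ring
  have hcong2 : ∀ᵐ x : ℝ, x ∈ Set.uIoc (-R₁) R₁ →
      ((-(1 - p) ^ 2) * x ^ 2 + 0 * x + 0) = f x * u x := by
    filter_upwards [ae_ne R₁] with x hx hmem
    rw [Set.uIoc_of_le (by linarith)] at hmem
    obtain ⟨h1, h2⟩ := hmem
    have hx2 : x < R₁ := lt_of_le_of_ne h2 hx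
    have habs : |x| < R₁ := abs_lt.mpr ⟨h1, hx2⟩
    rw [hf_in x habs, hu_in x habs.le]
    ring
  have hcong3 : ∀ᵐ x : ℝ, x ∈ Set.uIoc R₁ R₀ →
      ((-p * p) * x ^ 2 + (-p * (-(2 * R₁))) * x + (-p * R₁ ^ 2)) = f x * u x := by
    filter_upwards with x hmem
    rw [Set.uIoc_of_le (by linarith)] at hmem
    obtain ⟨h1, h2⟩ := hmem
    have habs : |x| = x := abs_of_pos (hR₁.trans h1)
    rw [hf_out x (by rw [habs]; exact h1), hu_out x (by rw [habs]; exact h1.le), habs]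
    ring
  have hi1 : IntervalIntegrable (fun x => f x * u x) volume (-R₀) (-R₁) :=
    integrable_of_ae_eq hcong1 (by apply Continuous.intervalIntegrable; fun_prop)
  have hi2 : IntervalIntegrable (fun x => f x * u x) volume (-R₁) R₁ :=
    integrable_of_ae_eq hcong2 (by apply Continuous.intervalIntegrable; fun_prop)
  have hi3 : IntervalIntegrable (fun x => f x * u x) volume R₁ R₀ :=
    integrable_of_ae_eq hcong3 (by apply Continuous.intervalIntegrable; fun_prop)
  have hsplit : (∫ x in (-R₀)..R₀, f x * u x)
      = (∫ x in (-R₀)..(-R₁), f x * u x) + (∫ x in (-R₁)..R₁, f x * u x)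
        + (∫ x in R₁..R₀, f x * u x) := by
    have h12 := intervalIntegral.integral_add_adjacent_intervals hi1 hi2
    rw [h12, intervalIntegral.integral_add_adjacent_intervals (hi1.trans hi2) hi3]
  have e1 : (∫ x in (-R₀)..(-R₁), f x * u x)
      = ∫ x in (-R₀)..(-R₁), ((-p * p) * x ^ 2 + (-p * (2 * R₁)) * x + (-p * R₁ ^ 2)) :=
    (intervalIntegral.integral_congr_ae hcong1).symm
  have e2 : (∫ x in (-R₁)..R₁, f x * u x)
      = ∫ x in (-R₁)..R₁, ((-(1 - p) ^ 2) * x ^ 2 + 0 * x + 0) :=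
    (intervalIntegral.integral_congr_ae hcong2).symm
  have e3 : (∫ x in R₁..R₀, f x * u x)
      = ∫ x in R₁..R₀, ((-p * p) * x ^ 2 + (-p * (-(2 * R₁))) * x + (-p * R₁ ^ 2)) :=
    (intervalIntegral.integral_congr_ae hcong3).symm
  have key : (∫ x in (-R₀)..R₀, f x * u x) = (4 / 3) * R₀ ^ 3 * p ^ 2 * (1 - p) ^ 2 := by
    have hR₁p : R₁ = p * R₀ := by rw [hp]; field_simp
    rw [hsplit, e1, e2, e3, poly_int, poly_int, poly_int, hR₁p]
    ring
  refine ⟨key, ?_⟩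
  have hνp : ν = 1 / p := by
    rw [hν, hp]
    field_simp
  rw [key, hνp]
  have hp0 : p ≠ 0 := ne_of_gt hppos
  have hp1 : (1 : ℝ) - p ≠ 0 := ne_of_gt (by linarith)
  have h0 : R₀ ≠ 0 := ne_of_gt hR0
  field_simp
end

section
/- Let 0 < R₁ < R₀, set p = (R₁/R₀)² and ν = (R₀/R₁)² = 1/p. With f(r) = 1_{(0,R₁)}(r) − p and u(r) = ((R₁² − R₀²)/(2R₀²)) r² for 0 < r ≤ R₁, u(r) = R₁²(log R₁ − log r) + (R₁²/2)(r²/R₀² − 1) for R₁ ≤ r ≤ R₀, the autocorrelation time τ = 2·((2/R₀²) ∫₀^{R₀} f(r) u(r) r dr)/(p(1−p)) satisfies τ = R₀² h₂(ν), where h₂(ν) = (ν^{−1} − 1 + log ν)/(ν − 1). -/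
/-- For reflected Brownian motion on the disk of radius `R₀` in `ℝ²`, the autocorrelation
time of the indicator of the concentric disk of radius `R₁` equals `R₀² h₂(ν)` with
`h₂(ν) = (ν⁻¹ − 1 + log ν)/(ν − 1)` and `ν = (R₀/R₁)²`. -/
theorem brownian_autocorrelation_dim_two
    (R₀ R₁ p ν : ℝ) (hR₁ : 0 < R₁) (hR : R₁ < R₀)
    (hp : p = (R₁ / R₀) ^ 2) (hν : ν = (R₀ / R₁) ^ 2)
    (f u : ℝ → ℝ)
    (hf_in : ∀ r : ℝ, 0 < r → r < R₁ → f r = 1 - p)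
    (hf_out : ∀ r : ℝ, R₁ < r → f r = -p)
    (hu_in : ∀ r : ℝ, 0 < r → r ≤ R₁ → u r = ((R₁ ^ 2 - R₀ ^ 2) / (2 * R₀ ^ 2)) * r ^ 2)
    (hu_out : ∀ r : ℝ, R₁ ≤ r →
      u r = R₁ ^ 2 * (Real.log R₁ - Real.log r) + (R₁ ^ 2 / 2) * (r ^ 2 / R₀ ^ 2 - 1)) :
    2 * ((2 / R₀ ^ 2) * ∫ r in (0 : ℝ)..R₀, f r * u r * r) / (p * (1 - p))
      = R₀ ^ 2 * ((ν⁻¹ - 1 + Real.log ν) / (ν - 1)) := by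
  have hR₀ : 0 < R₀ := hR₁.trans hR
  -- split the integral
  have hsplit : ∫ r in (0:ℝ)..R₀, f r * u r * r
      = (∫ r in (0:ℝ)..R₁, f r * u r * r) + ∫ r in R₁..R₀, f r * u r * r := by
    rw [intervalIntegral.integral_add_adjacent_intervals]
    · -- integrable on [0, R₁]
      apply IntervalIntegrable.congr_ae
        (show IntervalIntegrable (fun r => (1 - p) * (((R₁ ^ 2 - R₀ ^ 2) / (2 * R₀ ^ 2)) * r ^ 2) * r)
          MeasureTheory.volume 0 R₁ from
          ((by fun_prop : Continuous fun r : ℝ =>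
            (1 - p) * (((R₁ ^ 2 - R₀ ^ 2) / (2 * R₀ ^ 2)) * r ^ 2) * r).intervalIntegrable 0 R₁))
      have hae : ∀ᵐ x : ℝ, x ≠ R₁ :=
        MeasureTheory.compl_mem_ae_iff.mpr (MeasureTheory.measure_singleton R₁)
      filter_upwards [MeasureTheory.ae_restrict_mem measurableSet_uIoc, MeasureTheory.ae_restrict_of_ae hae] with x hx hne
      rw [Set.uIoc_of_le hR₁.le] at hx
      rw [hf_in x hx.1 (lt_of_le_of_ne hx.2 hne), hu_in x hx.1 hx.2]
    · -- integrable on [R₁, R₀]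
      apply IntervalIntegrable.congr_ae
        (show IntervalIntegrable (fun r => (-p) *
            (R₁ ^ 2 * (Real.log R₁ - Real.log r) + (R₁ ^ 2 / 2) * (r ^ 2 / R₀ ^ 2 - 1)) * r)
          MeasureTheory.volume R₁ R₀ from ?_)
      · filter_upwards [MeasureTheory.ae_restrict_mem measurableSet_uIoc] with x hx
        rw [Set.uIoc_of_le hR.le] at hx
        rw [hf_out x hx.1, hu_out x hx.1.le]
      · apply ContinuousOn.intervalIntegrable
        apply ContinuousOn.mul _ continuousOn_id
        apply ContinuousOn.mul continuousOn_const
        apply ContinuousOn.add _ (by fun_prop)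
        apply ContinuousOn.mul continuousOn_const
        apply ContinuousOn.sub continuousOn_const
        apply Real.continuousOn_log.mono
        intro x hx
        rw [Set.uIcc_of_le hR.le] at hx
        exact Set.mem_compl_singleton_iff.mpr (hR₁.trans_le hx.1).ne'
  have hI1 : ∫ r in (0:ℝ)..R₁, f r * u r * r
      = ((1 - p) * ((R₁ ^ 2 - R₀ ^ 2) / (2 * R₀ ^ 2))) * (R₁ ^ 4 / 4) := by
    have hcongr : ∫ r in (0:ℝ)..R₁, f r * u r * r
        = ∫ r in (0:ℝ)..R₁, ((1 - p) * ((R₁ ^ 2 - R₀ ^ 2) / (2 * R₀ ^ 2))) * r ^ 3 := by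
      apply intervalIntegral.integral_congr_ae
      have hae : ∀ᵐ x : ℝ, x ≠ R₁ :=
        MeasureTheory.compl_mem_ae_iff.mpr (MeasureTheory.measure_singleton R₁)
      filter_upwards [hae] with x hne hx
      rw [Set.uIoc_of_le hR₁.le] at hx
      rw [hf_in x hx.1 (lt_of_le_of_ne hx.2 hne), hu_in x hx.1 hx.2]
      ring
    rw [hcongr, intervalIntegral.integral_const_mul, integral_pow]
    norm_num
  have hI2 : ∫ r in R₁..R₀, f r * u r * r
      = (fun x : ℝ => -p * (R₁ ^ 2 * (Real.log R₁ * x ^ 2 / 2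
          - (x ^ 2 / 2 * Real.log x - x ^ 2 / 4))
          + R₁ ^ 2 / 2 * (x ^ 4 / (4 * R₀ ^ 2) - x ^ 2 / 2))) R₀
        - (fun x : ℝ => -p * (R₁ ^ 2 * (Real.log R₁ * x ^ 2 / 2
          - (x ^ 2 / 2 * Real.log x - x ^ 2 / 4))
          + R₁ ^ 2 / 2 * (x ^ 4 / (4 * R₀ ^ 2) - x ^ 2 / 2))) R₁ := by
    have hcongr : ∫ r in R₁..R₀, f r * u r * r
        = ∫ r in R₁..R₀, (-p) * (R₁ ^ 2 * (Real.log R₁ - Real.log r)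
            + (R₁ ^ 2 / 2) * (r ^ 2 / R₀ ^ 2 - 1)) * r := by
      apply intervalIntegral.integral_congr_ae
      filter_upwards with x hx
      rw [Set.uIoc_of_le hR.le] at hx
      rw [hf_out x hx.1, hu_out x hx.1.le]
    rw [hcongr]
    refine intervalIntegral.integral_eq_sub_of_hasDerivAt
      (f := fun x : ℝ => -p * (R₁ ^ 2 * (Real.log R₁ * x ^ 2 / 2
        - (x ^ 2 / 2 * Real.log x - x ^ 2 / 4))
        + R₁ ^ 2 / 2 * (x ^ 4 / (4 * R₀ ^ 2) - x ^ 2 / 2)))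
      (f' := fun r : ℝ => (-p) * (R₁ ^ 2 * (Real.log R₁ - Real.log r)
        + (R₁ ^ 2 / 2) * (r ^ 2 / R₀ ^ 2 - 1)) * r) ?_ ?_
    · intro x hx
      rw [Set.uIcc_of_le hR.le] at hx
      have hx0 : 0 < x := hR₁.trans_le hx.1
      have hlog := Real.hasDerivAt_log hx0.ne'
      have h2 : HasDerivAt (fun x : ℝ => x ^ 2) (2 * x) x := by
        simpa using hasDerivAt_pow 2 x
      have h4 : HasDerivAt (fun x : ℝ => x ^ 4) (4 * x ^ 3) x := by
        simpa using hasDerivAt_pow 4 x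
      have hmain := (((((h2.div_const 2).const_mul (Real.log R₁)).sub
          (((h2.div_const 2).mul hlog).sub (h2.div_const 4))).const_mul (R₁ ^ 2)).add
          (((h4.div_const (4 * R₀ ^ 2)).sub (h2.div_const 2)).const_mul
            (R₁ ^ 2 / 2))).const_mul (-p)
      have hxx : x ^ 2 / 2 * x⁻¹ = x / 2 := by
        rw [sq]; field_simp [hx0.ne']
      convert hmain using 1
      · rfl
      · funext y; simp only [Pi.sub_apply, Pi.mul_apply, Pi.add_apply]; ring
      · rw [hxx]; ring
    · apply ContinuousOn.intervalIntegrable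
      apply ContinuousOn.mul _ continuousOn_id
      apply ContinuousOn.mul continuousOn_const
      apply ContinuousOn.add _ (by fun_prop)
      apply ContinuousOn.mul continuousOn_const
      apply ContinuousOn.sub continuousOn_const
      apply Real.continuousOn_log.mono
      intro x hx
      rw [Set.uIcc_of_le hR.le] at hx
      exact Set.mem_compl_singleton_iff.mpr (hR₁.trans_le hx.1).ne'
  have hR₀ne : R₀ ≠ 0 := hR₀.ne'
  have hR₁ne : R₁ ≠ 0 := hR₁.ne'
  have hsqlt : R₁ ^ 2 < R₀ ^ 2 := by nlinarith
  have hsqne : R₀ ^ 2 - R₁ ^ 2 ≠ 0 := by nlinarith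
  have hlogν : Real.log ν = 2 * (Real.log R₀ - Real.log R₁) := by
    rw [hν, Real.log_pow, Real.log_div hR₀ne hR₁ne]
    push_cast; ring
  rw [hsplit, hI1, hI2, hlogν, hp, hν]
  field_simp
  ring
end

section
/- Let d ≥ 3 be an integer, let 0 < R₁ < R₀, set p = (R₁/R₀)^d and ν = (R₀/R₁)^d = 1/p. With f(r) = 1_{(0,R₁)}(r) − p and u(r) = ((R₁^d − R₀^d)/(d R₀^d)) r² for 0 < r ≤ R₁, u(r) = −(2R₁^d/(d(2−d))) r^{2−d} + (R₁^d/(dR₀^d)) r² + R₁²/(2−d) for R₁ ≤ r ≤ R₀, the autocorrelation time τ = 2·((d/R₀^d) ∫₀^{R₀} f(r) u(r) r^{d−1} dr)/(p(1−p)) satisfies τ = R₀² h_d(ν), where h_d(ν) = (4/(d²−4)) · ((d−2)ν^{−1} − d ν^{2/d − 1} + 2)/(ν^{2/d}(1 − ν^{−1})). -/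
open MeasureTheory Set intervalIntegral

set_option maxHeartbeats 4000000 in
/-- For reflected Brownian motion on the ball of radius `R₀` in `ℝ^d`, `d ≥ 3`, the
autocorrelation time of the indicator of the concentric ball of radius `R₁` equals
`R₀² h_d(ν)` with `h_d(ν) = (4/(d²−4)) ((d−2)ν⁻¹ − d ν^{2/d−1} + 2)/(ν^{2/d}(1 − ν⁻¹))`
and `ν = (R₀/R₁)^d`. -/
theorem brownian_autocorrelation_dim_ge_three
    (d : ℕ) (hd : 3 ≤ d)
    (R₀ R₁ p ν : ℝ) (hR₁ : 0 < R₁) (hR : R₁ < R₀)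
    (hp : p = (R₁ / R₀) ^ d) (hν : ν = (R₀ / R₁) ^ d)
    (f u : ℝ → ℝ)
    (hf_in : ∀ r : ℝ, 0 < r → r < R₁ → f r = 1 - p)
    (hf_out : ∀ r : ℝ, R₁ < r → f r = -p)
    (hu_in : ∀ r : ℝ, 0 < r → r ≤ R₁ →
      u r = ((R₁ ^ d - R₀ ^ d) / ((d : ℝ) * R₀ ^ d)) * r ^ 2)
    (hu_out : ∀ r : ℝ, R₁ ≤ r →
      u r = -(2 * R₁ ^ d / ((d : ℝ) * (2 - (d : ℝ)))) * r ^ ((2 : ℝ) - (d : ℝ))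
        + (R₁ ^ d / ((d : ℝ) * R₀ ^ d)) * r ^ 2 + R₁ ^ 2 / (2 - (d : ℝ))) :
    2 * (((d : ℝ) / R₀ ^ d) * ∫ r in (0 : ℝ)..R₀, f r * u r * r ^ (d - 1)) / (p * (1 - p))
      = R₀ ^ 2 * ((4 / ((d : ℝ) ^ 2 - 4))
          * (((d : ℝ) - 2) * ν⁻¹ - (d : ℝ) * ν ^ (2 / (d : ℝ) - 1) + 2)
          / (ν ^ (2 / (d : ℝ)) * (1 - ν⁻¹))) := by
  obtain ⟨m, rfl⟩ : ∃ m, d = m + 3 := ⟨d - 3, by omega⟩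
  have hR₀ : (0:ℝ) < R₀ := hR₁.trans hR
  have hR₀' : R₀ ≠ 0 := hR₀.ne'
  have hR₁' : R₁ ≠ 0 := hR₁.ne'
  set A : ℝ := (R₁ ^ (m+3) - R₀ ^ (m+3)) / (((m+3:ℕ) : ℝ) * R₀ ^ (m+3)) with hA
  set B : ℝ := -(2 * R₁ ^ (m+3) / (((m+3:ℕ) : ℝ) * (2 - ((m+3:ℕ) : ℝ)))) with hB
  set C : ℝ := R₁ ^ (m+3) / (((m+3:ℕ) : ℝ) * R₀ ^ (m+3)) with hC
  set D : ℝ := R₁ ^ 2 / (2 - ((m+3:ℕ) : ℝ)) with hD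
  have hexp : m + 3 - 1 = m + 2 := rfl
  -- inner a.e. identity
  have hne : ∀ᵐ x : ℝ, x ≠ R₁ := by
    have : (volume : Measure ℝ) {R₁} = 0 := Real.volume_singleton
    simpa [ae_iff, Set.setOf_eq_eq_singleton] using this
  have h1 : ∀ᵐ x : ℝ, x ∈ Set.uIoc (0:ℝ) R₁ →
      f x * u x * x ^ (m + 3 - 1) = (1 - p) * A * x ^ (m + 4) := by
    filter_upwards [hne] with x hx hmem
    rw [Set.uIoc_of_le hR₁.le] at hmem
    have hx0 : 0 < x := hmem.1
    have hxlt : x < R₁ := lt_of_le_of_ne hmem.2 hx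
    rw [hf_in x hx0 hxlt, hu_in x hx0 hmem.2, hexp]
    ring
  -- outer identity (everywhere on the interval)
  have h2 : ∀ x ∈ Set.uIoc R₁ R₀, f x * u x * x ^ (m + 3 - 1)
      = -p * B * x + -p * C * x ^ (m + 4) + -p * D * x ^ (m + 2) := by
    intro x hmem
    rw [Set.uIoc_of_le hR.le] at hmem
    have hx0 : 0 < x := hR₁.trans hmem.1
    have hr : x ^ ((2:ℝ) - ((m+3:ℕ) : ℝ)) * x ^ (m + 2) = x := by
      rw [← Real.rpow_natCast x (m+2), ← Real.rpow_add hx0]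
      rw [show (2:ℝ) - ((m+3:ℕ):ℝ) + ((m+2:ℕ):ℝ) = 1 by push_cast; ring, Real.rpow_one]
    rw [hf_out x hmem.1, hu_out x hmem.1.le, hexp]
    linear_combination (-p * B) * hr
  -- integrability of the two pieces
  have cont1 : Continuous fun x : ℝ => (1 - p) * A * x ^ (m + 4) := by fun_prop
  have cont2 : Continuous fun x : ℝ =>
      -p * B * x + -p * C * x ^ (m + 4) + -p * D * x ^ (m + 2) := by fun_prop
  have hint1 : IntervalIntegrable (fun x => f x * u x * x ^ (m + 3 - 1)) volume 0 R₁ := by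
    refine (cont1.intervalIntegrable 0 R₁).congr_ae ?_
    exact (ae_restrict_iff' measurableSet_uIoc).mpr (h1.mono fun x hx hmem => (hx hmem).symm)
  have hint2 : IntervalIntegrable (fun x => f x * u x * x ^ (m + 3 - 1)) volume R₁ R₀ := by
    refine (cont2.intervalIntegrable R₁ R₀).congr_ae ?_
    exact (ae_restrict_iff' measurableSet_uIoc).mpr (ae_of_all _ fun x hx => (h2 x hx).symm)
  have hsplit := intervalIntegral.integral_add_adjacent_intervals hint1 hint2
  rw [show (∫ r in (0:ℝ)..R₀, f r * u r * r ^ (m + 3 - 1)) =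
      (∫ r in (0:ℝ)..R₁, f r * u r * r ^ (m + 3 - 1))
        + ∫ r in R₁..R₀, f r * u r * r ^ (m + 3 - 1) from hsplit.symm]
  rw [intervalIntegral.integral_congr_ae h1,
      intervalIntegral.integral_congr_ae (ae_of_all _ h2)]
  -- compute the integrals
  have e1 : IntervalIntegrable (fun x : ℝ => -p * B * x) volume R₁ R₀ :=
    (by fun_prop : Continuous fun x : ℝ => -p * B * x).intervalIntegrable R₁ R₀
  have e2 : IntervalIntegrable (fun x : ℝ => -p * C * x ^ (m + 4)) volume R₁ R₀ :=
    (by fun_prop : Continuous _).intervalIntegrable R₁ R₀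
  have e3 : IntervalIntegrable (fun x : ℝ => -p * D * x ^ (m + 2)) volume R₁ R₀ :=
    (by fun_prop : Continuous _).intervalIntegrable R₁ R₀
  rw [intervalIntegral.integral_add (e1.add e2) e3, intervalIntegral.integral_add e1 e2,
      intervalIntegral.integral_const_mul, intervalIntegral.integral_const_mul,
      intervalIntegral.integral_const_mul, intervalIntegral.integral_const_mul,
      integral_pow, integral_pow, integral_pow, integral_id]
  -- rewrite the ν-powers
  have hν0 : (0:ℝ) < ν := by rw [hν]; positivity
  have hνinv : ν⁻¹ = p := by rw [hν, hp, ← inv_pow, inv_div]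
  have hνp : ν = p⁻¹ := by rw [← hνinv, inv_inv]
  have hcast : ((m+3:ℕ) : ℝ) ≠ 0 := by push_cast; positivity
  have h2d : ν ^ ((2:ℝ) / ((m+3:ℕ) : ℝ)) = (R₀ / R₁) ^ 2 := by
    rw [hν, ← Real.rpow_natCast (R₀ / R₁) (m+3), ← Real.rpow_mul (by positivity),
        mul_div_cancel₀ _ hcast, show (2:ℝ) = ((2:ℕ):ℝ) by norm_num, Real.rpow_natCast]
  have hsub : ν ^ ((2:ℝ) / ((m+3:ℕ) : ℝ) - 1) = (R₀ / R₁) ^ 2 / ν := by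
    rw [Real.rpow_sub hν0, Real.rpow_one, h2d]
  rw [hsub, h2d, hνinv, hνp]
  -- pure algebra
  have hplt : p < 1 := by
    rw [hp]; exact pow_lt_one₀ (by positivity) ((div_lt_one hR₀).mpr hR) (by omega)
  have hp0 : 0 < p := by rw [hp]; positivity
  have hp1 : 1 - p ≠ 0 := by nlinarith
  have hd2 : 2 - ((m+3:ℕ) : ℝ) ≠ 0 := by push_cast; nlinarith [Nat.cast_nonneg (α := ℝ) m]
  have hdsq : ((m+3:ℕ) : ℝ) ^ 2 - 4 ≠ 0 := by
    push_cast; nlinarith [Nat.cast_nonneg (α := ℝ) m]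
  have hp' : p ≠ 0 := hp0.ne'
  have ht : R₀ ^ (m+3) - R₁ ^ (m+3) ≠ 0 :=
    sub_ne_zero.mpr (pow_lt_pow_left₀ hR hR₁.le (by omega)).ne'
  have hm : (0:ℝ) ≤ (m:ℝ) := Nat.cast_nonneg m
  have hm5 : ((m:ℝ) + 4 + 1) ≠ 0 := by positivity
  have hm3' : ((m:ℝ) + 2 + 1) ≠ 0 := by positivity
  rw [hA, hB, hC, hD, hp, div_pow]
  push_cast at hd2 hdsq hcast ⊢
  rw [zero_pow (by omega : m + 4 + 1 ≠ 0)]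
  field_simp
  ring
end

section
/- Consider the function g(ν) = (ν − 1)/(log ν)² on the interval (1, ∞). Then g attains a global minimum at a unique point ν* ∈ (1, ∞); this minimizer is the unique solution in (1, ∞) of the equation ν log ν = 2(ν − 1), and it satisfies 4.9 < ν* < 5. -/
open Real

noncomputable def hfun (x : ℝ) : ℝ := x * Real.log x - 2 * (x - 1)

lemma log5_gt : (8:ℝ)/5 < Real.log 5 := by
  rw [Real.lt_log_iff_exp_lt (by norm_num)]
  have h5 : Real.exp ((8:ℝ)/5) ^ (5:ℕ) = Real.exp 1 ^ (8:ℕ) := by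
    rw [← Real.exp_nat_mul, ← Real.exp_nat_mul]; norm_num
  have h1 : Real.exp 1 ^ (8:ℕ) < 2.7182818286 ^ (8:ℕ) :=
    pow_lt_pow_left₀ Real.exp_one_lt_d9 (Real.exp_pos 1).le (by norm_num)
  have h2 : (2.7182818286:ℝ) ^ (8:ℕ) < 5 ^ (5:ℕ) := by norm_num
  have h3 : Real.exp ((8:ℝ)/5) ^ (5:ℕ) < 5 ^ (5:ℕ) := h5 ▸ (h1.trans h2)
  exact lt_of_pow_lt_pow_left₀ 5 (by norm_num) h3

lemma log49_lt : Real.log 4.9 < 78/49 := by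
  rw [Real.log_lt_iff_lt_exp (by norm_num)]
  have h5 : Real.exp ((78:ℝ)/49) ^ (49:ℕ) = Real.exp 1 ^ (78:ℕ) := by
    rw [← Real.exp_nat_mul, ← Real.exp_nat_mul]; norm_num
  have h1 : (2.7182818283:ℝ) ^ (78:ℕ) < Real.exp 1 ^ (78:ℕ) :=
    pow_lt_pow_left₀ Real.exp_one_gt_d9 (by norm_num) (by norm_num)
  have h2 : (4.9:ℝ) ^ (49:ℕ) < (2.7182818283:ℝ) ^ (78:ℕ) := by norm_num
  have h3 : (4.9:ℝ) ^ (49:ℕ) < Real.exp ((78:ℝ)/49) ^ (49:ℕ) := by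
    rw [h5]; exact h2.trans h1
  exact lt_of_pow_lt_pow_left₀ 49 (Real.exp_pos _).le h3

lemma hasDerivAt_hfun {x : ℝ} (hx : 0 < x) :
    HasDerivAt hfun (Real.log x - 1) x := by
  have h1 : HasDerivAt (fun y : ℝ => y * Real.log y) (1 * Real.log x + x * x⁻¹) x :=
    (hasDerivAt_id x).mul (Real.hasDerivAt_log hx.ne')
  have h2 : HasDerivAt (fun y : ℝ => 2 * (y - 1)) 2 x := by
    simpa using (((hasDerivAt_id x).sub_const 1).const_mul 2)
  have := h1.sub h2
  refine this.congr_deriv ?_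
  rw [mul_inv_cancel₀ hx.ne']
  ring

lemma deriv_hfun {x : ℝ} (hx : 0 < x) : deriv hfun x = Real.log x - 1 :=
  (hasDerivAt_hfun hx).deriv

lemma strictConvex_hfun : StrictConvexOn ℝ (Set.Ici 1) hfun := by
  apply strictConvexOn_of_deriv2_pos (convex_Ici 1)
  · intro x hx
    exact ((hasDerivAt_hfun (lt_of_lt_of_le one_pos hx)).continuousAt).continuousWithinAt
  · intro x hx
    rw [interior_Ici] at hx
    have hx0 : (0:ℝ) < x := lt_trans one_pos hx
    have heq : deriv hfun =ᶠ[nhds x] fun y => Real.log y - 1 := by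
      filter_upwards [eventually_gt_nhds (lt_trans one_pos hx : (0:ℝ) < x)] with y hy
      exact deriv_hfun hy
    simp only [Function.iterate_succ, Function.iterate_zero, Function.comp_apply, Function.id_def]
    rw [heq.deriv_eq]
    have : HasDerivAt (fun y => Real.log y - 1) x⁻¹ x := (Real.hasDerivAt_log hx0.ne').sub_const 1
    rw [this.deriv]
    positivity

lemma hfun_one : hfun 1 = 0 := by simp [hfun]

lemma hfun_49_neg : hfun 4.9 < 0 := by
  have h := log49_lt
  have : (4.9:ℝ) * Real.log 4.9 < 4.9 * (78/49) := by nlinarith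
  unfold hfun; nlinarith

lemma hfun_5_pos : 0 < hfun 5 := by
  have h := log5_gt
  unfold hfun; nlinarith

lemma exists_root : ∃ ν : ℝ, ν ∈ Set.Ioo (4.9:ℝ) 5 ∧ hfun ν = 0 := by
  have hcont : ContinuousOn hfun (Set.Icc (4.9:ℝ) 5) := by
    intro x hx
    exact ((hasDerivAt_hfun (by have := hx.1; norm_num at this ⊢; linarith)).continuousAt).continuousWithinAt
  have := intermediate_value_Ioo (by norm_num : (4.9:ℝ) ≤ 5) hcont
  have h0 : (0:ℝ) ∈ Set.Ioo (hfun 4.9) (hfun 5) := ⟨hfun_49_neg, hfun_5_pos⟩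
  obtain ⟨ν, hν, hval⟩ := this h0
  exact ⟨ν, hν, hval⟩

section sign
variable {ν' : ℝ} (h1 : 1 < ν') (h0 : hfun ν' = 0)

include h1 h0 in
lemma hfun_neg_of_lt {x : ℝ} (hx1 : 1 < x) (hx2 : x < ν') : hfun x < 0 := by
  have hd : (0:ℝ) < ν' - 1 := by linarith
  have hA : 0 < (ν' - x) / (ν' - 1) := by apply div_pos <;> linarith
  have hB : 0 < (x - 1) / (ν' - 1) := by apply div_pos <;> linarith
  have hab : (ν' - x) / (ν' - 1) + (x - 1) / (ν' - 1) = 1 := by field_simp; ring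
  have hxeq : ((ν' - x) / (ν' - 1)) • (1:ℝ) + ((x - 1) / (ν' - 1)) • ν' = x := by
    rw [smul_eq_mul, smul_eq_mul]; field_simp; ring
  have := strictConvex_hfun.2 (Set.self_mem_Ici) (Set.mem_Ici.2 h1.le)
    (by intro h; rw [h] at h1; exact lt_irrefl _ h1) hA hB hab
  rw [hxeq] at this
  simpa [hfun_one, h0, smul_eq_mul] using this

include h1 h0 in
lemma hfun_pos_of_gt {x : ℝ} (hx : ν' < x) : 0 < hfun x := by
  have hd : (0:ℝ) < x - 1 := by linarith
  have hA : 0 < (x - ν') / (x - 1) := by apply div_pos <;> linarith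
  have hB : 0 < (ν' - 1) / (x - 1) := by apply div_pos <;> linarith
  have hab : (x - ν') / (x - 1) + (ν' - 1) / (x - 1) = 1 := by field_simp; ring
  have hxeq : ((x - ν') / (x - 1)) • (1:ℝ) + ((ν' - 1) / (x - 1)) • x = ν' := by
    rw [smul_eq_mul, smul_eq_mul]; field_simp; ring
  have := strictConvex_hfun.2 (Set.self_mem_Ici) (Set.mem_Ici.2 (by linarith : (1:ℝ) ≤ x))
    (by intro h; rw [← h] at hx; linarith) hA hB hab
  rw [hxeq, h0, hfun_one] at this
  rw [smul_eq_mul, smul_eq_mul, mul_zero, zero_add] at this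
  nlinarith

end sign

noncomputable def gfun (x : ℝ) : ℝ := (x - 1) / Real.log x ^ 2

lemma hasDerivAt_gfun {x : ℝ} (hx : 1 < x) :
    HasDerivAt gfun (hfun x / (x * Real.log x ^ 3)) x := by
  have hx0 : (0:ℝ) < x := lt_trans one_pos hx
  have hlog : 0 < Real.log x := Real.log_pos hx
  have h1 : HasDerivAt (fun y : ℝ => y - 1) 1 x := (hasDerivAt_id x).sub_const 1
  have h2 : HasDerivAt (fun y : ℝ => Real.log y ^ 2) (2 * Real.log x ^ 1 * x⁻¹) x :=
    (Real.hasDerivAt_log hx0.ne').pow 2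
  have h3 := h1.div h2 (by positivity)
  refine h3.congr_deriv ?_
  unfold hfun
  field_simp

lemma gfun_strict_min {ν' : ℝ} (h1 : 1 < ν') (h0 : hfun ν' = 0) {x : ℝ} (hx : 1 < x)
    (hne : x ≠ ν') : gfun ν' < gfun x := by
  rcases lt_or_gt_of_ne hne with hlt | hgt
  · -- x < ν' : g strictly anti on [x, ν']
    have hanti : StrictAntiOn gfun (Set.Icc x ν') := by
      apply strictAntiOn_of_deriv_neg (convex_Icc x ν')
      · intro y hy
        exact (hasDerivAt_gfun (lt_of_lt_of_le hx hy.1)).continuousAt.continuousWithinAt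
      · intro y hy
        rw [interior_Icc] at hy
        have hy1 : 1 < y := lt_trans hx hy.1
        rw [(hasDerivAt_gfun hy1).deriv]
        apply div_neg_of_neg_of_pos
        · exact hfun_neg_of_lt h1 h0 hy1 hy.2
        · have := Real.log_pos hy1; positivity
    exact hanti (Set.mem_Icc.2 ⟨le_refl x, hlt.le⟩) (Set.mem_Icc.2 ⟨hlt.le, le_refl ν'⟩) hlt
  · -- ν' < x : g strictly mono on [ν', x]
    have hmono : StrictMonoOn gfun (Set.Icc ν' x) := by
      apply strictMonoOn_of_deriv_pos (convex_Icc ν' x)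
      · intro y hy
        exact (hasDerivAt_gfun (lt_of_lt_of_le h1 hy.1)).continuousAt.continuousWithinAt
      · intro y hy
        rw [interior_Icc] at hy
        have hy1 : 1 < y := lt_trans h1 hy.1
        rw [(hasDerivAt_gfun hy1).deriv]
        apply div_pos
        · exact hfun_pos_of_gt h1 h0 hy.1
        · have := Real.log_pos hy1; positivity
    exact hmono (Set.mem_Icc.2 ⟨le_refl ν', hgt.le⟩) (Set.mem_Icc.2 ⟨hgt.le, le_refl x⟩) hgt

/-- The function `g(ν) = (ν − 1)/(log ν)²` on `(1, ∞)` attains its global minimum at a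
unique point `ν*`, which is the unique solution in `(1, ∞)` of `ν log ν = 2(ν − 1)` and
satisfies `4.9 < ν* < 5`. -/
theorem g_unique_minimizer :
    ∃ ν' : ℝ, 1 < ν' ∧
      (∀ ν : ℝ, 1 < ν → (ν' - 1) / Real.log ν' ^ 2 ≤ (ν - 1) / Real.log ν ^ 2) ∧
      (∀ μ : ℝ, 1 < μ →
        (∀ ν : ℝ, 1 < ν → (μ - 1) / Real.log μ ^ 2 ≤ (ν - 1) / Real.log ν ^ 2) → μ = ν') ∧
      ν' * Real.log ν' = 2 * (ν' - 1) ∧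
      (∀ μ : ℝ, 1 < μ → μ * Real.log μ = 2 * (μ - 1) → μ = ν') ∧
      4.9 < ν' ∧ ν' < 5 := by
  obtain ⟨ν', ⟨hν1, hν2⟩, h0⟩ := exists_root
  have h1 : (1:ℝ) < ν' := by linarith
  refine ⟨ν', h1, ?_, ?_, ?_, ?_, hν1, hν2⟩
  · intro ν hν
    rcases eq_or_ne ν ν' with rfl | hne
    · exact le_refl _
    · exact (gfun_strict_min h1 h0 hν hne).le
  · intro μ hμ hmin
    by_contra hne
    have hlt := gfun_strict_min h1 h0 hμ hne
    have := hmin ν' h1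
    exact absurd this (not_le.2 hlt)
  · have : ν' * Real.log ν' - 2 * (ν' - 1) = 0 := h0
    linarith
  · intro μ hμ heq
    by_contra hne
    have hμ0 : hfun μ = 0 := by unfold hfun; linarith
    rcases lt_or_gt_of_ne hne with hlt | hgt
    · exact absurd hμ0 (hfun_neg_of_lt h1 h0 hμ hlt).ne
    · exact absurd hμ0 (hfun_pos_of_gt h1 h0 hgt).ne'
end

section
/- Define l₁(ν) = (ν − 1) h₁(ν)/(log(ν)(1 − ν^{−2})) for ν > 1, where h₁(ν) = (4/3)(ν − 1)/ν²; equivalently l₁(ν) = (4/3)(ν − 1)/((ν + 1) log ν). Then l₁ is strictly decreasing on (1, ∞). -/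
open Real Set

lemma two_log_lt_aux {x : ℝ} (hx : 1 < x) : 2 * Real.log x < x - x⁻¹ := by
  set φ : ℝ → ℝ := fun y => y - y⁻¹ - 2 * Real.log y with hφ
  have hcont : ContinuousOn φ (Ici (1:ℝ)) := by
    intro y hy
    have hy0 : y ≠ 0 := (lt_of_lt_of_le one_pos hy).ne'
    exact ((continuousAt_id.sub (continuousAt_inv₀ hy0)).sub
      ((Real.continuousAt_log hy0).const_mul 2)).continuousWithinAt
  have hderiv : ∀ y ∈ interior (Ici (1:ℝ)), 0 < deriv φ y := by
    intro y hy
    rw [interior_Ici] at hy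
    have hy0 : (0:ℝ) < y := lt_trans one_pos hy
    have h1 : HasDerivAt φ (1 - (-(y^2)⁻¹) - 2 * y⁻¹) y := by
      have := ((hasDerivAt_id y).sub (hasDerivAt_inv hy0.ne')).sub
        ((Real.hasDerivAt_log hy0.ne').const_mul 2)
      exact this
    rw [h1.deriv]
    have heq : 1 - (-(y^2)⁻¹) - 2 * y⁻¹ = (y - 1)^2 / y^2 := by
      field_simp
      ring
    rw [heq]
    rw [mem_Ioi] at hy
    apply div_pos
    · nlinarith
    · positivity
  have hmono : StrictMonoOn φ (Ici 1) :=
    strictMonoOn_of_deriv_pos (convex_Ici 1) hcont hderiv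
  have := hmono (self_mem_Ici) (mem_Ici.mpr hx.le) hx
  simp only [hφ, Real.log_one, inv_one] at this
  linarith

lemma u_mono : StrictMonoOn (fun x : ℝ => (x + 1) * Real.log x / (x - 1)) (Set.Ioi 1) := by
  have hint : interior (Set.Ioi (1:ℝ)) = Set.Ioi 1 := interior_Ioi
  apply strictMonoOn_of_deriv_pos (convex_Ioi 1)
  · intro y hy
    rw [mem_Ioi] at hy
    have hy0 : y ≠ 0 := (lt_trans one_pos hy).ne'
    have hy1 : y - 1 ≠ 0 := sub_ne_zero.mpr hy.ne'
    exact (((continuousAt_id.add continuousAt_const).mul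
      (Real.continuousAt_log hy0)).div
      (continuousAt_id.sub continuousAt_const) hy1).continuousWithinAt
  · intro y hy
    rw [hint, mem_Ioi] at hy
    have hy0 : (0:ℝ) < y := lt_trans one_pos hy
    have hy1 : (0:ℝ) < y - 1 := sub_pos.mpr hy
    have hnum : HasDerivAt (fun x : ℝ => (x + 1) * Real.log x)
        (1 * Real.log y + (y + 1) * y⁻¹) y :=
      ((hasDerivAt_id y).add_const 1).mul (Real.hasDerivAt_log hy0.ne')
    have hden : HasDerivAt (fun x : ℝ => x - 1) 1 y := (hasDerivAt_id y).sub_const 1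
    have h : HasDerivAt (fun x : ℝ => (x + 1) * Real.log x / (x - 1))
        (((1 * Real.log y + (y + 1) * y⁻¹) * (y - 1) - (y + 1) * Real.log y * 1) / (y - 1)^2)
        y := hnum.div hden hy1.ne'
    rw [h.deriv]
    apply div_pos
    · have key := two_log_lt_aux hy
      have heq : (1 * Real.log y + (y + 1) * y⁻¹) * (y - 1) - (y + 1) * Real.log y * 1
          = (y - y⁻¹) - 2 * Real.log y := by
        field_simp
        ring
      rw [heq]
      linarith
    · positivity

/-- In the Brownian-motion-in-balls model with `d = 1`, the relative variance factor
`l₁(ν) = (ν−1) h₁(ν)/(log ν (1−ν^{−2}))`, with `h₁(ν) = (4/3)(ν−1)/ν²` — equivalently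
`l₁(ν) = (4/3)(ν−1)/((ν+1) log ν)` — is strictly decreasing on `(1, ∞)`. -/
theorem l_one_strictAnti :
    (∀ ν : ℝ, 1 < ν →
      (ν - 1) * ((4 / 3) * (ν - 1) / ν ^ 2) / (Real.log ν * (1 - (ν ^ 2)⁻¹))
        = (4 / 3) * (ν - 1) / ((ν + 1) * Real.log ν)) ∧
    StrictAntiOn
      (fun ν : ℝ => (ν - 1) * ((4 / 3) * (ν - 1) / ν ^ 2) / (Real.log ν * (1 - (ν ^ 2)⁻¹)))
      (Set.Ioi 1) := by
  have hid : ∀ ν : ℝ, 1 < ν →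
      (ν - 1) * ((4 / 3) * (ν - 1) / ν ^ 2) / (Real.log ν * (1 - (ν ^ 2)⁻¹))
        = (4 / 3) * (ν - 1) / ((ν + 1) * Real.log ν) := by
    intro ν hν
    have hν0 : (0:ℝ) < ν := lt_trans one_pos hν
    have hlog : Real.log ν ≠ 0 := (Real.log_pos hν).ne'
    have hsq : (1:ℝ) < ν ^ 2 := by nlinarith
    have h1 : (1:ℝ) - (ν ^ 2)⁻¹ ≠ 0 := by
      have : (ν ^ 2)⁻¹ < 1 := inv_lt_one_of_one_lt₀ hsq
      linarith
    have h2 : ν + 1 ≠ 0 := by linarith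
    have h3 : ν - 1 ≠ 0 := sub_ne_zero.mpr hν.ne'
    have hd : Real.log ν * (1 - (ν ^ 2)⁻¹) = ((ν + 1) * Real.log ν) * ((ν - 1) / ν ^ 2) := by
      field_simp
      ring
    rw [hd]
    field_simp
  refine ⟨hid, ?_⟩
  intro a ha b hb hab
  rw [mem_Ioi] at ha hb
  simp only
  rw [hid a ha, hid b hb]
  have hla := Real.log_pos ha
  have hlb := Real.log_pos hb
  have hu := u_mono (mem_Ioi.mpr ha) (mem_Ioi.mpr hb) hab
  simp only at hu
  rw [div_lt_div_iff₀ (by linarith) (by linarith)] at hu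
  rw [div_lt_div_iff₀ (by nlinarith) (by nlinarith)]
  nlinarith [hu]
end

section
/- Define, for ν > 1: l₂(ν) = (ν − 1) h₂(ν)/(log(ν)(1 − ν^{−1})) where h₂(ν) = (ν^{−1} − 1 + log ν)/(ν − 1) (equivalently l₂(ν) = (ν log ν − ν + 1)/((ν − 1) log ν)); and for each integer d ≥ 3, l_d(ν) = (ν − 1) h_d(ν)/(log(ν)(1 − ν^{−2/d})) where h_d(ν) = (4/(d²−4)) · ((d−2)ν^{−1} − d ν^{2/d−1} + 2)/(ν^{2/d}(1 − ν^{−1})). Then for every integer d ≥ 2, the function l_d is strictly increasing on (1, ∞). -/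
open Real Set


lemma key_ineq {s : ℝ} (hs : 1 < s) : 2 * Real.log s < s - s⁻¹ := by
  have hmono : StrictMonoOn (fun x : ℝ => x - x⁻¹ - 2 * Real.log x) (Ici 1) := by
    apply strictMonoOn_of_deriv_pos (convex_Ici 1)
    · have hne : ∀ x ∈ Ici (1:ℝ), x ≠ 0 := fun x hx h => by
        rw [h] at hx; exact absurd (mem_Ici.mp hx) (by norm_num)
      apply ContinuousOn.sub
      · exact continuousOn_id.sub (continuousOn_inv₀.mono (fun x hx => hne x hx))
      · exact continuousOn_const.mul (Real.continuousOn_log.mono (fun x hx => hne x hx))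
    · intro x hx
      rw [interior_Ici] at hx
      have hx0 : (0:ℝ) < x := lt_trans one_pos hx
      have hx0' : x ≠ 0 := ne_of_gt hx0
      have hd : HasDerivAt (fun x : ℝ => x - x⁻¹ - 2 * Real.log x)
          (1 - (-(x ^ 2)⁻¹) - 2 * x⁻¹) x :=
        ((hasDerivAt_id x).sub (hasDerivAt_inv hx0')).sub
          ((Real.hasDerivAt_log hx0').const_mul 2)
      rw [hd.deriv]
      have h1 : (1:ℝ) - (-(x ^ 2)⁻¹) - 2 * x⁻¹ = (1 - x⁻¹)^2 := by
        field_simp; ring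
      rw [h1]
      have h2 : x⁻¹ < 1 := by rw [inv_lt_one_iff₀]; right; exact hx
      have : (0:ℝ) < 1 - x⁻¹ := by linarith
      positivity
  have h := hmono (self_mem_Ici) (mem_Ici.mpr (le_of_lt hs)) hs
  norm_num at h
  linarith


-- continuity helper
lemma cont_aux : ∀ x ∈ Ioi (1:ℝ), x ≠ 0 := fun x hx h => by
  rw [h] at hx; exact absurd (mem_Ioi.mp hx) (by norm_num)

lemma log_pos_aux {x : ℝ} (hx : x ∈ Ioi (1:ℝ)) : 0 < Real.log x := Real.log_pos hx

lemma W_mono : StrictMonoOn (fun s : ℝ => (s - 1) / Real.log s) (Ioi 1) := by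
  apply strictMonoOn_of_deriv_pos (convex_Ioi 1)
  · apply ContinuousOn.div
    · exact continuousOn_id.sub continuousOn_const
    · exact Real.continuousOn_log.mono cont_aux
    · exact fun x hx => ne_of_gt (log_pos_aux hx)
  · intro x hx
    rw [interior_Ioi] at hx
    have hx1 : (1:ℝ) < x := hx
    have hx0 : (0:ℝ) < x := lt_trans one_pos hx1
    have hlog : 0 < Real.log x := Real.log_pos hx1
    have hd : HasDerivAt (fun s : ℝ => (s - 1) / Real.log s)
        ((1 * Real.log x - (x - 1) * x⁻¹) / (Real.log x) ^ 2) x :=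
      ((hasDerivAt_id x).sub_const 1).div (Real.hasDerivAt_log (ne_of_gt hx0))
        (ne_of_gt hlog)
    rw [hd.deriv]
    apply div_pos _ (by positivity)
    have : Real.log x⁻¹ < x⁻¹ - 1 :=
      Real.log_lt_sub_one_of_pos (by positivity) (by
        intro h; rw [inv_eq_one] at h; linarith)
    rw [Real.log_inv] at this
    have hxi : (x - 1) * x⁻¹ = 1 - x⁻¹ := by field_simp
    nlinarith

-- pointwise lemma A
lemma A_lt {β x y : ℝ} (hβ : 0 < β) (hx : 1 < x) (hxy : x < y) :
    (x ^ β - 1) / Real.log x < (y ^ β - 1) / Real.log y := by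
  have hx0 : (0:ℝ) < x := lt_trans one_pos hx
  have hy0 : (0:ℝ) < y := lt_trans hx0 hxy
  have hxb : 1 < x ^ β := by
    rw [Real.one_lt_rpow_iff_of_pos hx0]; exact Or.inl ⟨hx, hβ⟩
  have hyb : 1 < y ^ β := by
    rw [Real.one_lt_rpow_iff_of_pos hy0]; exact Or.inl ⟨lt_trans hx hxy, hβ⟩
  have hlt : x ^ β < y ^ β := Real.rpow_lt_rpow (le_of_lt hx0) hxy hβ
  have key := W_mono (mem_Ioi.mpr hxb) (mem_Ioi.mpr hyb) hlt
  simp only at key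
  have ex : (x ^ β - 1) / Real.log x = β * ((x ^ β - 1) / Real.log (x ^ β)) := by
    rw [Real.log_rpow hx0]
    rw [mul_div_assoc']
    rw [mul_comm β (Real.log x)]
    rw [div_mul_eq_div_div, mul_div_assoc]
    rw [mul_div_cancel_left₀ _ (ne_of_gt hβ)]
  have ey : (y ^ β - 1) / Real.log y = β * ((y ^ β - 1) / Real.log (y ^ β)) := by
    rw [Real.log_rpow hy0]
    rw [mul_div_assoc']
    rw [mul_comm β (Real.log y)]
    rw [div_mul_eq_div_div, mul_div_assoc]
    rw [mul_div_cancel_left₀ _ (ne_of_gt hβ)]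
  rw [ex, ey]
  exact mul_lt_mul_of_pos_left key hβ

lemma B_anti : StrictAntiOn (fun s : ℝ => (s - 1) / ((s + 1) * Real.log s)) (Ioi 1) := by
  apply strictAntiOn_of_deriv_neg (convex_Ioi 1)
  · apply ContinuousOn.div
    · exact continuousOn_id.sub continuousOn_const
    · exact (continuousOn_id.add continuousOn_const).mul (Real.continuousOn_log.mono cont_aux)
    · intro x hx
      have h1 : (1:ℝ) < x := hx
      have := Real.log_pos h1
      positivity
  · intro x hx
    rw [interior_Ioi] at hx
    have hx1 : (1:ℝ) < x := hx
    have hx0 : (0:ℝ) < x := lt_trans one_pos hx1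
    have hlog : 0 < Real.log x := Real.log_pos hx1
    have hden : (x + 1) * Real.log x ≠ 0 := by positivity
    have hd : HasDerivAt (fun s : ℝ => (s - 1) / ((s + 1) * Real.log s))
        ((1 * ((x + 1) * Real.log x) - (x - 1) * (1 * Real.log x + (x + 1) * x⁻¹))
          / ((x + 1) * Real.log x) ^ 2) x := by
      exact ((hasDerivAt_id x).sub_const 1).div
        (((hasDerivAt_id x).add_const 1).mul (Real.hasDerivAt_log (ne_of_gt hx0))) hden
    rw [hd.deriv]
    apply div_neg_of_neg_of_pos _ (by positivity)
    have hnum : 1 * ((x + 1) * Real.log x) - (x - 1) * (1 * Real.log x + (x + 1) * x⁻¹)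
        = 2 * Real.log x - (x - x⁻¹) := by
      field_simp; ring
    rw [hnum]
    have := key_ineq hx1
    linarith

lemma sqrt_log_lt {x : ℝ} (hx : 1 < x) : Real.sqrt x * Real.log x < x - 1 := by
  have hx0 : (0:ℝ) < x := lt_trans one_pos hx
  have hs1 : 1 < Real.sqrt x := by
    rw [show (1:ℝ) = Real.sqrt 1 by simp]
    exact Real.sqrt_lt_sqrt (by norm_num) hx
  have hk := key_ineq hs1
  have hlog : Real.log (Real.sqrt x) = Real.log x / 2 := Real.log_sqrt (le_of_lt hx0)
  have hss : Real.sqrt x * Real.sqrt x = x := Real.mul_self_sqrt (le_of_lt hx0)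
  have hs0 : (0:ℝ) < Real.sqrt x := lt_trans one_pos hs1
  rw [hlog] at hk
  have hinv : (Real.sqrt x)⁻¹ = Real.sqrt x / x := by
    rw [eq_div_iff (ne_of_gt hx0)]
    field_simp [ne_of_gt hs0]
    exact (Real.sq_sqrt hx0.le).symm
  rw [hinv] at hk
  have h2 : Real.log x < Real.sqrt x - Real.sqrt x / x := by linarith
  calc Real.sqrt x * Real.log x < Real.sqrt x * (Real.sqrt x - Real.sqrt x / x) :=
        mul_lt_mul_of_pos_left h2 hs0
    _ = x - 1 := by
        rw [mul_sub, hss]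
        congr 1
        rw [mul_div_assoc', hss, div_self (ne_of_gt hx0)]

lemma part2_mono : StrictMonoOn (fun ν : ℝ => (ν - 1)⁻¹ - (Real.log ν)⁻¹) (Ioi 1) := by
  apply strictMonoOn_of_deriv_pos (convex_Ioi 1)
  · apply ContinuousOn.sub
    · exact (continuousOn_id.sub continuousOn_const).inv₀
        (fun x hx => sub_ne_zero.mpr (ne_of_gt hx))
    · exact ((Real.continuousOn_log.mono (fun x hx h => by
        rw [h] at hx; exact absurd (mem_Ioi.mp hx) (by norm_num))).inv₀
        (fun x hx => ne_of_gt (Real.log_pos hx)))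
  · intro x hx
    rw [interior_Ioi] at hx
    have hx1 : (1:ℝ) < x := hx
    have hx0 : (0:ℝ) < x := lt_trans one_pos hx1
    have hx1' : (0:ℝ) < x - 1 := by linarith
    have hlog : 0 < Real.log x := Real.log_pos hx1
    have hd : HasDerivAt (fun ν : ℝ => (ν - 1)⁻¹ - (Real.log ν)⁻¹)
        (-1 / (x - 1) ^ 2 - -x⁻¹ / (Real.log x) ^ 2) x := by
      exact (((hasDerivAt_id x).sub_const 1).inv (ne_of_gt hx1')).sub
        ((Real.hasDerivAt_log (ne_of_gt hx0)).inv (ne_of_gt hlog))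
    rw [hd.deriv]
    have key : x * (Real.log x) ^ 2 < (x - 1) ^ 2 := by
      have h1 := sqrt_log_lt hx1
      have hss : Real.sqrt x * Real.sqrt x = x := Real.mul_self_sqrt (le_of_lt hx0)
      have ha : (0:ℝ) < Real.sqrt x * Real.log x :=
        mul_pos (Real.sqrt_pos.mpr hx0) hlog
      nlinarith [mul_lt_mul_of_pos_left h1 ha, mul_lt_mul_of_pos_right h1 hx1']
    rw [div_sub_div _ _ (by positivity : ((x:ℝ)-1)^2 ≠ 0) (by positivity : (Real.log x)^2 ≠ 0)]
    apply div_pos _ (by positivity)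
    have heq : -1 * Real.log x ^ 2 - (x - 1) ^ 2 * -x⁻¹ = ((x-1)^2 - x * Real.log x ^2) * x⁻¹ := by
      field_simp; ring
    rw [heq]
    exact mul_pos (by linarith) (by positivity)

lemma alg_even (C S P L : ℝ) (hP : P - 1 ≠ 0) (hL : L ≠ 0) :
    C * (2*(S*(P-1)))/((P-1)*L) = C*2*(S/L) := by field_simp
lemma alg_odd (C S P B L : ℝ) (hfac : P - 1 = (B-1)*(B+1)) (hB1 : B - 1 ≠ 0)
    (hB2 : B + 1 ≠ 0) (hL : L ≠ 0) :
    C * (2*(S*(P-1)) - (B-1)^2)/((P-1)*L) = C*(2*(S/L) - (B-1)/((B+1)*L)) := by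
  rw [hfac]; field_simp
lemma alg_div (dd B L : ℝ) (hd : dd ≠ 0) (hB : B + 1 ≠ 0) (hL : L ≠ 0) :
    (B-1)/((B+1)*(dd*L)) = (1/dd)*((B-1)/((B+1)*L)) := by
  field_simp


lemma telescope {ν : ℝ} (hν0 : 0 < ν) (a : ℝ) (M : ℕ) :
    (∑ j ∈ Finset.range M, (ν ^ (1 - ((j:ℝ)+1)*a) - 1)) * (ν ^ a - 1)
      = ν - ν ^ (1 - (M:ℝ)*a) - (M:ℝ) * (ν ^ a - 1) := by
  have key : ∀ j ∈ Finset.range M, (ν ^ (1 - ((j:ℝ)+1)*a) - 1) * (ν ^ a - 1)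
      = ((ν ^ (1-(j:ℝ)*a) - ν ^ (1-((j:ℝ)+1)*a)) - (ν ^ a - 1)) := by
    intro j _
    have : ν ^ (1 - ((j:ℝ)+1)*a) * ν ^ a = ν ^ (1-(j:ℝ)*a) := by
      rw [← Real.rpow_add hν0]; ring_nf
    nlinarith [this]
  rw [Finset.sum_mul, Finset.sum_congr rfl key, Finset.sum_sub_distrib]
  have tel : ∑ j ∈ Finset.range M, (ν ^ (1-(j:ℝ)*a) - ν ^ (1-((j:ℝ)+1)*a))
      = ν ^ (1 - ((0:ℕ):ℝ)*a) - ν ^ (1 - (M:ℝ)*a) := by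
    have := Finset.sum_range_sub' (fun j : ℕ => ν ^ (1-(j:ℝ)*a)) M
    simp only [Nat.cast_add, Nat.cast_one] at this ⊢
    convert this using 2
  rw [tel]
  simp [Finset.sum_const]
  ring


lemma simp1 (d : ℕ) (hd : 3 ≤ d) {ν : ℝ} (hν : 1 < ν) :
    (ν - 1) * ((4/((d:ℝ)^2-4)) * (((d:ℝ)-2)*ν⁻¹ - (d:ℝ)*ν^(2/(d:ℝ)-1) + 2)
        / (ν^(2/(d:ℝ)) * (1-ν⁻¹))) / (Real.log ν * (1 - ν^(-(2/(d:ℝ)))))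
    = (4/((d:ℝ)^2-4)) * (2*ν - (d:ℝ)*ν^(2/(d:ℝ)) + (d:ℝ) - 2)
        / ((ν^(2/(d:ℝ)) - 1) * Real.log ν) := by
  have hd3 : (3:ℝ) ≤ (d:ℝ) := by exact_mod_cast hd
  have hν0 : (0:ℝ) < ν := lt_trans one_pos hν
  have ha : (0:ℝ) < 2/(d:ℝ) := by positivity
  have hp1 : 1 < ν ^ (2/(d:ℝ)) := by
    rw [Real.one_lt_rpow_iff_of_pos hν0]; exact Or.inl ⟨hν, ha⟩
  have e1 : ν ^ (2/(d:ℝ) - 1) = ν ^ (2/(d:ℝ)) / ν := by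
    rw [Real.rpow_sub hν0, Real.rpow_one]
  have e2 : ν ^ (-(2/(d:ℝ))) = (ν ^ (2/(d:ℝ)))⁻¹ := Real.rpow_neg (le_of_lt hν0) _
  rw [e1, e2]
  have hL : Real.log ν ≠ 0 := ne_of_gt (Real.log_pos hν)
  have hν' : ν ≠ 0 := ne_of_gt hν0
  have h1 : ν - 1 ≠ 0 := sub_ne_zero.mpr (ne_of_gt hν)
  have hp0 : ν ^ (2/(d:ℝ)) ≠ 0 := by positivity
  have hp1' : ν ^ (2/(d:ℝ)) - 1 ≠ 0 := sub_ne_zero.mpr (ne_of_gt hp1)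
  have h3 : 1 - ν⁻¹ ≠ 0 := by
    have : ν⁻¹ < 1 := by rw [inv_lt_one_iff₀]; right; exact hν
    intro h; rw [sub_eq_zero] at h; rw [← h] at this; exact lt_irrefl _ this
  have h4 : 1 - (ν ^ (2/(d:ℝ)))⁻¹ ≠ 0 := by
    have : (ν ^ (2/(d:ℝ)))⁻¹ < 1 := by rw [inv_lt_one_iff₀]; right; exact hp1
    intro h; rw [sub_eq_zero] at h; rw [← h] at this; exact lt_irrefl _ this
  have hc : (d:ℝ)^2 - 4 ≠ 0 := by nlinarith
  generalize ν ^ (2/(d:ℝ)) = p at *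
  field_simp
  ring

lemma id_even (d : ℕ) (hd : 3 ≤ d) (he : Even d) {ν : ℝ} (hν0 : 0 < ν) :
    2*ν - (d:ℝ)*ν^(2/(d:ℝ)) + (d:ℝ) - 2
    = 2 * ((∑ j ∈ Finset.range ((d-1)/2), (ν ^ (1 - ((j:ℝ)+1)*(2/(d:ℝ))) - 1))
        * (ν ^ (2/(d:ℝ)) - 1)) := by
  obtain ⟨k, hk⟩ := he
  have hk2 : 2 ≤ k := by omega
  have hM : (d-1)/2 = k - 1 := by omega
  have hdr : (d:ℝ) = 2*(k:ℝ) := by rw [hk]; push_cast; ring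
  have hkr : ((k:ℝ)) ≠ 0 := by positivity
  have hMr : (((k-1:ℕ)):ℝ) = (k:ℝ) - 1 := by
    push_cast [Nat.cast_sub (by omega : 1 ≤ k)]; ring
  rw [hM, telescope hν0 _ (k-1), hMr]
  have hexp : 1 - ((k:ℝ) - 1)*(2/(d:ℝ)) = 2/(d:ℝ) := by
    rw [hdr]; field_simp; ring
  rw [hexp, hdr]
  ring

lemma id_odd (d : ℕ) (hd : 3 ≤ d) (ho : Odd d) {ν : ℝ} (hν0 : 0 < ν) :
    2*ν - (d:ℝ)*ν^(2/(d:ℝ)) + (d:ℝ) - 2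
    = 2 * ((∑ j ∈ Finset.range ((d-1)/2), (ν ^ (1 - ((j:ℝ)+1)*(2/(d:ℝ))) - 1))
        * (ν ^ (2/(d:ℝ)) - 1)) - (ν ^ (1/(d:ℝ)) - 1)^2 := by
  obtain ⟨k, hk⟩ := ho
  have hk1 : 1 ≤ k := by omega
  have hM : (d-1)/2 = k := by omega
  have hdr : (d:ℝ) = 2*(k:ℝ)+1 := by rw [hk]; push_cast; ring
  have hdr0 : (d:ℝ) ≠ 0 := by rw [hdr]; positivity
  rw [hM, telescope hν0 _ k]
  have hexp : 1 - (k:ℝ)*(2/(d:ℝ)) = 1/(d:ℝ) := by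
    field_simp; rw [hdr]; ring
  rw [hexp]
  have hsq : ν ^ (1/(d:ℝ)) * ν ^ (1/(d:ℝ)) = ν ^ (2/(d:ℝ)) := by
    rw [← Real.rpow_add hν0]; ring_nf
  rw [hdr] at hsq ⊢
  nlinarith [hsq]


lemma part3 (d : ℕ) (hd : 3 ≤ d) :
    StrictMonoOn
      (fun ν : ℝ => (ν - 1)
        * ((4 / ((d : ℝ) ^ 2 - 4))
            * (((d : ℝ) - 2) * ν⁻¹ - (d : ℝ) * ν ^ (2 / (d : ℝ) - 1) + 2)
            / (ν ^ (2 / (d : ℝ)) * (1 - ν⁻¹)))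
        / (Real.log ν * (1 - ν ^ (-(2 / (d : ℝ))))))
      (Set.Ioi 1) := by
  have hd3 : (3:ℝ) ≤ (d:ℝ) := by exact_mod_cast hd
  have hd0 : (0:ℝ) < (d:ℝ) := by linarith
  have hc : (0:ℝ) < 4/((d:ℝ)^2-4) := by
    apply div_pos (by norm_num); nlinarith
  set M := (d-1)/2 with hMdef
  have hM1 : 1 ≤ M := by omega
  -- positivity of the exponents
  have hβ : ∀ j ∈ Finset.range M, (0:ℝ) < 1 - ((j:ℝ)+1)*(2/(d:ℝ)) := by
    intro j hj
    have hj' : 2*(j+1) ≤ d - 1 := by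
      have := Finset.mem_range.mp hj; omega
    have hj2 : (2:ℝ)*((j:ℝ)+1) ≤ (d:ℝ)-1 := by
      have h1 : ((2*(j+1):ℕ):ℝ) ≤ ((d-1:ℕ):ℝ) := by exact_mod_cast hj'
      push_cast [Nat.cast_sub (by omega : 1 ≤ d)] at h1
      linarith
    have : ((j:ℝ)+1)*(2/(d:ℝ)) = (2*((j:ℝ)+1))/(d:ℝ) := by ring
    rw [sub_pos, this, div_lt_one hd0]
    linarith
  -- the strictly monotone "sum" part, pointwise
  have hsum : ∀ x ∈ Ioi (1:ℝ), ∀ y ∈ Ioi (1:ℝ), x < y →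
      (∑ j ∈ Finset.range M, (x ^ (1 - ((j:ℝ)+1)*(2/(d:ℝ))) - 1) / Real.log x)
      < ∑ j ∈ Finset.range M, (y ^ (1 - ((j:ℝ)+1)*(2/(d:ℝ))) - 1) / Real.log y := by
    intro x hx y hy hxy
    apply Finset.sum_lt_sum_of_nonempty
    · exact Finset.nonempty_range_iff.mpr (by omega)
    · intro j hj
      exact A_lt (hβ j hj) hx hxy
  -- nonzeroness package
  have facts : ∀ x ∈ Ioi (1:ℝ), 0 < Real.log x ∧ 1 < x ^ (2/(d:ℝ)) ∧ 1 < x ^ (1/(d:ℝ)) ∧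
      x ^ (1/(d:ℝ)) * x ^ (1/(d:ℝ)) = x ^ (2/(d:ℝ)) := by
    intro x hx
    have hx1 : (1:ℝ) < x := hx
    have hx0 : (0:ℝ) < x := lt_trans one_pos hx1
    refine ⟨Real.log_pos hx1, ?_, ?_, ?_⟩
    · rw [Real.one_lt_rpow_iff_of_pos hx0]; exact Or.inl ⟨hx1, by positivity⟩
    · rw [Real.one_lt_rpow_iff_of_pos hx0]; exact Or.inl ⟨hx1, by positivity⟩
    · rw [← Real.rpow_add hx0]; ring_nf
  intro x hx y hy hxy
  have hx1 : (1:ℝ) < x := hx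
  have hy1 : (1:ℝ) < y := hy
  obtain ⟨hLx, hPx, hBx, hsqx⟩ := facts x hx
  obtain ⟨hLy, hPy, hBy, hsqy⟩ := facts y hy
  simp only
  rw [simp1 d hd hx1, simp1 d hd hy1]
  rcases Nat.even_or_odd d with he | ho
  · -- even case
    rw [id_even d hd he (by linarith), id_even d hd he (by linarith)]
    have conv : ∀ z : ℝ, 0 < Real.log z → 1 < z ^ (2/(d:ℝ)) →
        (4/((d:ℝ)^2-4)) * (2 * ((∑ j ∈ Finset.range ((d-1)/2),
            (z ^ (1 - ((j:ℝ)+1)*(2/(d:ℝ))) - 1)) * (z ^ (2/(d:ℝ)) - 1)))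
          / ((z ^ (2/(d:ℝ)) - 1) * Real.log z)
        = (4/((d:ℝ)^2-4)) * 2 * (∑ j ∈ Finset.range M,
            (z ^ (1 - ((j:ℝ)+1)*(2/(d:ℝ))) - 1) / Real.log z) := by
      intro z hL hP
      rw [← Finset.sum_div, ← hMdef]
      exact alg_even _ _ _ _ (sub_ne_zero.mpr (ne_of_gt hP)) (ne_of_gt hL)
    rw [conv x hLx hPx, conv y hLy hPy]
    have := hsum x hx y hy hxy
    have h2 : (0:ℝ) < 4/((d:ℝ)^2-4) * 2 := by linarith
    exact mul_lt_mul_of_pos_left this h2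
  · -- odd case
    rw [id_odd d hd ho (by linarith), id_odd d hd ho (by linarith)]
    have conv : ∀ z : ℝ, 0 < Real.log z → 1 < z ^ (1/(d:ℝ)) →
        z ^ (1/(d:ℝ)) * z ^ (1/(d:ℝ)) = z ^ (2/(d:ℝ)) →
        (4/((d:ℝ)^2-4)) * (2 * ((∑ j ∈ Finset.range ((d-1)/2),
            (z ^ (1 - ((j:ℝ)+1)*(2/(d:ℝ))) - 1)) * (z ^ (2/(d:ℝ)) - 1))
            - (z ^ (1/(d:ℝ)) - 1)^2)
          / ((z ^ (2/(d:ℝ)) - 1) * Real.log z)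
        = (4/((d:ℝ)^2-4)) * (2 * (∑ j ∈ Finset.range M,
            (z ^ (1 - ((j:ℝ)+1)*(2/(d:ℝ))) - 1) / Real.log z)
          - (z ^ (1/(d:ℝ)) - 1) / ((z ^ (1/(d:ℝ)) + 1) * Real.log z)) := by
      intro z hL hB hsq
      rw [← Finset.sum_div, ← hMdef]
      exact alg_odd _ _ _ _ _ (by rw [← hsq]; ring)
        (sub_ne_zero.mpr (ne_of_gt hB)) (by positivity) (ne_of_gt hL)
    rw [conv x hLx hBx hsqx, conv y hLy hBy hsqy]
    -- last term comparison via B_anti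
    have hterm : (y ^ (1/(d:ℝ)) - 1) / ((y ^ (1/(d:ℝ)) + 1) * Real.log y)
        < (x ^ (1/(d:ℝ)) - 1) / ((x ^ (1/(d:ℝ)) + 1) * Real.log x) := by
      have hxy' : x ^ (1/(d:ℝ)) < y ^ (1/(d:ℝ)) :=
        Real.rpow_lt_rpow (by linarith) hxy (by positivity)
      have hba := B_anti (mem_Ioi.mpr hBx) (mem_Ioi.mpr hBy) hxy'
      simp only at hba
      have lx : Real.log x = (d:ℝ) * Real.log (x ^ (1/(d:ℝ))) := by
        rw [Real.log_rpow (by linarith)]; field_simp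
      have ly : Real.log y = (d:ℝ) * Real.log (y ^ (1/(d:ℝ))) := by
        rw [Real.log_rpow (by linarith)]; field_simp
      rw [lx, ly]
      rw [alg_div (d:ℝ) _ _ (ne_of_gt hd0) (by positivity) (ne_of_gt (Real.log_pos hBx)),
          alg_div (d:ℝ) _ _ (ne_of_gt hd0) (by positivity) (ne_of_gt (Real.log_pos hBy))]
      apply mul_lt_mul_of_pos_left hba (by positivity)
    have hS := hsum x hx y hy hxy
    apply mul_lt_mul_of_pos_left _ hc
    linarith

lemma part1 : StrictMonoOn
    (fun ν : ℝ => (ν - 1) * ((ν⁻¹ - 1 + Real.log ν) / (ν - 1))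
      / (Real.log ν * (1 - ν⁻¹))) (Set.Ioi 1) := by
  have eq1 : ∀ x ∈ Ioi (1:ℝ),
      (x - 1) * ((x⁻¹ - 1 + Real.log x) / (x - 1)) / (Real.log x * (1 - x⁻¹))
        = 1 + ((x - 1)⁻¹ - (Real.log x)⁻¹) := by
    intro x hx
    have hx1 : (1:ℝ) < x := hx
    have hx0 : (0:ℝ) < x := lt_trans one_pos hx1
    have h1 : x - 1 ≠ 0 := sub_ne_zero.mpr (ne_of_gt hx1)
    have h2 : Real.log x ≠ 0 := ne_of_gt (Real.log_pos hx1)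
    have h3 : 1 - x⁻¹ ≠ 0 := by
      have : x⁻¹ < 1 := by rw [inv_lt_one_iff₀]; right; exact hx1
      intro h; rw [sub_eq_zero] at h; rw [← h] at this; exact lt_irrefl _ this
    field_simp
    ring
  intro x hx y hy hxy
  simp only
  rw [eq1 x hx, eq1 y hy]
  have := part2_mono hx hy hxy
  simp only at this
  linarith

/-- In the Brownian-motion-in-balls model, for every dimension `d ≥ 2`, the relative
variance factor `l_d(ν) = (ν−1) h_d(ν)/(log ν (1−ν^{−2/d}))` is strictly increasing
on `(1, ∞)`. -/
theorem l_d_strictMono :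
    StrictMonoOn
      (fun ν : ℝ => (ν - 1) * ((ν⁻¹ - 1 + Real.log ν) / (ν - 1))
        / (Real.log ν * (1 - ν⁻¹)))
      (Set.Ioi 1) ∧
    ∀ d : ℕ, 3 ≤ d →
      StrictMonoOn
        (fun ν : ℝ => (ν - 1)
          * ((4 / ((d : ℝ) ^ 2 - 4))
              * (((d : ℝ) - 2) * ν⁻¹ - (d : ℝ) * ν ^ (2 / (d : ℝ) - 1) + 2)
              / (ν ^ (2 / (d : ℝ)) * (1 - ν⁻¹)))
          / (Real.log ν * (1 - ν ^ (-(2 / (d : ℝ))))))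
        (Set.Ioi 1) := ⟨part1, part3⟩
end
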